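/- Inf-sup from two constructions: Let Σ be a Hilbert space and U, R Hilbert spaces, and b(τ; v, s) a bounded bilinear form on Σ × (U × R). Suppose for every u ∈ U there exists η ∈ Σ with B₁(η) = u (where B₁: Σ → U is a bounded linear operator), ‖η‖_Σ ≤ C₁‖u‖_U, and suppose for every r ∈ R there exists ξ ∈ Σ with B₁(ξ) = 0, B₂(ξ) = r (B₂: Σ → R bounded linear), and ‖ξ‖_Σ ≤ C₂‖r‖_R, where also ‖B₂‖ ≤ C₃. If b(τ; v, s) = ⟨B₁ τ, v⟩_U + ⟨B₂ τ, s⟩_R, then b satisfies the inf-sup condition: for every (u, r) ∈ U × R, sup_{τ ≠ 0} b(τ; u, r)/‖τ‖_Σ ≥ c (‖u‖_U + ‖r‖_R) for a constant c > 0 depending only on C₁, C₂, C₃. -/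

import Mathlib

private lemma stmt_9_aux (a b : ℝ) : (a + b) ^ 2 / 4 ≤ 1 / 2 * (a ^ 2 + b ^ 2) := by
  nlinarith [sq_nonneg (a - b)]

/-- Inf-sup from two constructions: if `B₁ : Σ → U` admits a bounded right
inverse and `B₂ : Σ → R` admits a bounded right inverse with values in the
kernel of `B₁`, then `b(τ; v, s) = ⟨B₁ τ, v⟩ + ⟨B₂ τ, s⟩` satisfies the inf-sup
condition with a constant depending only on `C₁, C₂, C₃`. -/
theorem stmt_9 {X U R : Type*}
    [NormedAddCommGroup X] [InnerProductSpace ℝ X] [CompleteSpace X]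
    [NormedAddCommGroup U] [InnerProductSpace ℝ U] [CompleteSpace U]
    [NormedAddCommGroup R] [InnerProductSpace ℝ R] [CompleteSpace R]
    (B₁ : X →L[ℝ] U) (B₂ : X →L[ℝ] R)
    (C₁ C₂ C₃ : ℝ) (hC₁ : 0 < C₁) (hC₂ : 0 < C₂) (hC₃ : 0 < C₃)
    (h1 : ∀ u : U, ∃ η : X, B₁ η = u ∧ ‖η‖ ≤ C₁ * ‖u‖)
    (h2 : ∀ r : R, ∃ ξ : X, B₁ ξ = 0 ∧ B₂ ξ = r ∧ ‖ξ‖ ≤ C₂ * ‖r‖)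
    (h3 : ‖B₂‖ ≤ C₃) :
    ∃ c > 0, ∀ (u : U) (r : R),
      c * (‖u‖ + ‖r‖) ≤
        ⨆ τ : X, ((inner ℝ (B₁ τ) u : ℝ) + (inner ℝ (B₂ τ) r : ℝ)) / ‖τ‖ := by
  obtain ⟨t, ht⟩ : ∃ t : ℝ, t = (1 + C₁ ^ 2 * C₃ ^ 2) / 2 := ⟨_, rfl⟩
  have htpos : 0 < t := by rw [ht]; positivity
  obtain ⟨K, hK⟩ : ∃ K : ℝ, K = C₁ + t * C₂ := ⟨_, rfl⟩
  have hKpos : 0 < K := by rw [hK]; positivity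
  refine ⟨1 / (4 * K), by positivity, fun u r => ?_⟩
  -- boundedness of the sup
  have hbdd : BddAbove (Set.range fun τ : X =>
      ((inner ℝ (B₁ τ) u : ℝ) + (inner ℝ (B₂ τ) r : ℝ)) / ‖τ‖) := by
    refine ⟨‖B₁‖ * ‖u‖ + ‖B₂‖ * ‖r‖, ?_⟩
    rintro x ⟨τ, rfl⟩
    rcases eq_or_ne τ 0 with h | h
    · simp [h]
      positivity
    · have hτ : 0 < ‖τ‖ := norm_pos_iff.mpr h
      rw [div_le_iff₀ hτ]
      have h1' : (inner ℝ (B₁ τ) u : ℝ) ≤ ‖B₁‖ * ‖u‖ * ‖τ‖ := by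
        calc (inner ℝ (B₁ τ) u : ℝ) ≤ ‖B₁ τ‖ * ‖u‖ := real_inner_le_norm _ _
          _ ≤ (‖B₁‖ * ‖τ‖) * ‖u‖ := by
              gcongr; exact B₁.le_opNorm τ
          _ = ‖B₁‖ * ‖u‖ * ‖τ‖ := by ring
      have h2' : (inner ℝ (B₂ τ) r : ℝ) ≤ ‖B₂‖ * ‖r‖ * ‖τ‖ := by
        calc (inner ℝ (B₂ τ) r : ℝ) ≤ ‖B₂ τ‖ * ‖r‖ := real_inner_le_norm _ _
          _ ≤ (‖B₂‖ * ‖τ‖) * ‖r‖ := by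
              gcongr; exact B₂.le_opNorm τ
          _ = ‖B₂‖ * ‖r‖ * ‖τ‖ := by ring
      nlinarith [norm_nonneg τ]
  by_cases hur : ‖u‖ + ‖r‖ = 0
  · rw [hur, mul_zero]
    have h0 := le_ciSup hbdd (0 : X)
    simpa using h0
  have hs : 0 < ‖u‖ + ‖r‖ := lt_of_le_of_ne (by positivity) (Ne.symm hur)
  obtain ⟨η, hη1, hη2⟩ := h1 u
  obtain ⟨ξ, hξ1, hξ2, hξ3⟩ := h2 r
  obtain ⟨τ₀, hτ₀⟩ : ∃ τ₀ : X, τ₀ = η + t • ξ := ⟨_, rfl⟩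
  have hB1 : B₁ τ₀ = u := by simp [hτ₀, hξ1, hη1]
  have hB2 : B₂ τ₀ = B₂ η + t • r := by simp [hτ₀, hξ2]
  have hf : ((inner ℝ (B₁ τ₀) u : ℝ) + (inner ℝ (B₂ τ₀) r : ℝ))
      = ‖u‖ ^ 2 + ((inner ℝ (B₂ η) r : ℝ) + t * ‖r‖ ^ 2) := by
    rw [hB1, hB2, real_inner_self_eq_norm_sq]
    rw [inner_add_left, real_inner_smul_left, real_inner_self_eq_norm_sq]
    try ring
  -- lower bound on the cross term
  have hcross : -(C₁ * C₃ * ‖u‖ * ‖r‖) ≤ (inner ℝ (B₂ η) r : ℝ) := by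
    have h1' : |(inner ℝ (B₂ η) r : ℝ)| ≤ ‖B₂ η‖ * ‖r‖ := abs_real_inner_le_norm _ _
    have h2' : ‖B₂ η‖ ≤ ‖B₂‖ * ‖η‖ := B₂.le_opNorm η
    have h3' : ‖B₂‖ * ‖η‖ * ‖r‖ ≤ C₃ * (C₁ * ‖u‖) * ‖r‖ := by
      have hm : ‖B₂‖ * ‖η‖ ≤ C₃ * (C₁ * ‖u‖) :=
        mul_le_mul h3 hη2 (norm_nonneg η) hC₃.le
      exact mul_le_mul_of_nonneg_right hm (norm_nonneg r)
    have := abs_le.mp h1'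
    nlinarith [norm_nonneg r, norm_nonneg (B₂ η)]
  have hlow : (1/2) * (‖u‖ ^ 2 + ‖r‖ ^ 2)
      ≤ ((inner ℝ (B₁ τ₀) u : ℝ) + (inner ℝ (B₂ τ₀) r : ℝ)) := by
    rw [hf]
    have amgm : C₁ * C₃ * ‖u‖ * ‖r‖ ≤ ‖u‖ ^ 2 / 2 + C₁ ^ 2 * C₃ ^ 2 * ‖r‖ ^ 2 / 2 := by
      nlinarith [sq_nonneg (‖u‖ - C₁ * C₃ * ‖r‖)]
    rw [ht]
    linarith [hcross, amgm]
  have hfpos : 0 < ((inner ℝ (B₁ τ₀) u : ℝ) + (inner ℝ (B₂ τ₀) r : ℝ)) := by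
    refine lt_of_lt_of_le ?_ hlow
    nlinarith [mul_pos hs hs, sq_nonneg (‖u‖ - ‖r‖)]
  have hτ₀ne : τ₀ ≠ 0 := by
    intro h
    rw [h] at hfpos
    simp at hfpos
  have hτ₀pos : 0 < ‖τ₀‖ := norm_pos_iff.mpr hτ₀ne
  have hτ₀le : ‖τ₀‖ ≤ K * (‖u‖ + ‖r‖) := by
    rw [hτ₀]
    calc ‖η + t • ξ‖ ≤ ‖η‖ + ‖t • ξ‖ := norm_add_le _ _
      _ = ‖η‖ + t * ‖ξ‖ := by rw [norm_smul, Real.norm_of_nonneg htpos.le]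
      _ ≤ C₁ * ‖u‖ + t * (C₂ * ‖r‖) := by gcongr
      _ ≤ K * (‖u‖ + ‖r‖) := by
          have e1 : 0 ≤ C₁ * ‖r‖ := by positivity
          have e2 : 0 ≤ t * C₂ * ‖u‖ := by positivity
          have e3 : K * (‖u‖ + ‖r‖)
              = C₁ * ‖u‖ + t * (C₂ * ‖r‖) + (C₁ * ‖r‖ + t * C₂ * ‖u‖) := by
            rw [hK]; ring
          linarith
  have key : 1 / (4 * K) * (‖u‖ + ‖r‖)
      ≤ ((inner ℝ (B₁ τ₀) u : ℝ) + (inner ℝ (B₂ τ₀) r : ℝ)) / ‖τ₀‖ := by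
    rw [le_div_iff₀ hτ₀pos]
    have h1' : 1 / (4 * K) * (‖u‖ + ‖r‖) * ‖τ₀‖
        ≤ 1 / (4 * K) * (‖u‖ + ‖r‖) * (K * (‖u‖ + ‖r‖)) :=
      mul_le_mul_of_nonneg_left hτ₀le (by positivity)
    refine h1'.trans ?_
    have heq : 1 / (4 * K) * (‖u‖ + ‖r‖) * (K * (‖u‖ + ‖r‖))
        = (‖u‖ + ‖r‖) ^ 2 / 4 := by
      field_simp
    rw [heq]
    exact le_trans (stmt_9_aux ‖u‖ ‖r‖) hlow
  exact key.trans (le_ciSup hbdd τ₀)
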